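/- Let (P,≻,q) be a problem and k > 1. If the constrained First-Preference-First mechanism FPF^k is stable at (P,≻,q) (i.e., FPF^k(P,≻,q) is stable at (P,≻,q)), then the constrained Gale-Shapley mechanism GS^k is not manipulable at (P,≻,q). -/

import Mathlib

set_option linter.unusedSectionVars false
set_option linter.unusedVariables false
set_option linter.unnecessarySimpa false


/-!
School choice framework following Bonkoungou–Nesterov,
"Reforms meet fairness concerns in school and college admissions".

Students `I` and schools `S` are finite types with `|I| > |S|`.
A strict preference relation of a student over `S ∪ {∅}` is represented by a list
of `Option S` containing every element exactly once (earlier = more preferred);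
`none` is the outside option.  A strict priority order of a school is a list of
`I` containing every student exactly once (earlier = higher priority).
-/

namespace SchoolChoice

variable {I S : Type*} [Fintype I] [DecidableEq I] [Fintype S] [DecidableEq S]

/-- `p` is a strict preference relation on `S ∪ {∅}`: a ranking list containing every
element of `Option S` exactly once. -/
def ValidPref (p : List (Option S)) : Prop := p.Nodup ∧ ∀ x : Option S, x ∈ p

/-- `pr` is a strict priority order: a ranking list containing every student exactly once. -/
def ValidPrio (pr : List I) : Prop := pr.Nodup ∧ ∀ i : I, i ∈ pr

/-- `a` is strictly preferred to `b` under the preference relation `p`. -/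
def prefLt (p : List (Option S)) (a b : Option S) : Prop := p.idxOf a < p.idxOf b

/-- `i` has strictly higher priority than `j` under the priority order `pr`. -/
def prioLt (pr : List I) (i j : I) : Prop := pr.idxOf i < pr.idxOf j

instance (p : List (Option S)) (a b : Option S) : Decidable (prefLt p a b) :=
  inferInstanceAs (Decidable (_ < _))

instance (pr : List I) (i j : I) : Decidable (prioLt pr i j) :=
  inferInstanceAs (Decidable (_ < _))

/-- The acceptable schools of `p` (those preferred to the outside option), in preference
order. -/
def acceptables (p : List (Option S)) : List S := (p.takeWhile Option.isSome).filterMap id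

/-- The truncation of `p` after its `k`-th acceptable school: the preference relation
listing, in the same order, only the `min k _` most-preferred acceptable schools of `p`,
all other schools being unacceptable (kept below `none` in their original order). -/
def truncate (p : List (Option S)) (k : ℕ) : List (Option S) :=
  ((acceptables p).take k).map some ++
    none :: p.filter (fun x => decide (x ≠ none ∧ x ∉ ((acceptables p).take k).map some))

/-- `μ` is a matching: it respects the capacities `q`. -/
def IsMatching (q : S → ℕ) (μ : I → Option S) : Prop :=
  ∀ s : S, (Finset.univ.filter (fun i => μ i = some s)).card ≤ q s

/-- The pair `(i, s)` blocks `μ` under the problem `(P, prio, q)`. -/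
def Blocks (P : I → List (Option S)) (prio : S → List I) (q : S → ℕ)
    (μ : I → Option S) (i : I) (s : S) : Prop :=
  prefLt (P i) (some s) (μ i) ∧
    ((Finset.univ.filter (fun j => μ j = some s)).card < q s ∨
      ∃ j : I, μ j = some s ∧ prioLt (prio s) i j)

/-- `i` is a blocking student for `μ` under `(P, prio, q)`. -/
def BlockingStudent (P : I → List (Option S)) (prio : S → List I) (q : S → ℕ)
    (μ : I → Option S) (i : I) : Prop :=
  ∃ s : S, Blocks P prio q μ i s

/-- `μ` is individually rational under `P`. -/
def IndividuallyRational (P : I → List (Option S)) (μ : I → Option S) : Prop :=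
  ∀ i : I, ¬ prefLt (P i) none (μ i)

/-- `μ` is stable at `(P, prio, q)`. -/
def IsStable (P : I → List (Option S)) (prio : S → List I) (q : S → ℕ)
    (μ : I → Option S) : Prop :=
  IndividuallyRational P μ ∧ ∀ i : I, ¬ BlockingStudent P prio q μ i

/-- The number of blocking students for `μ` under `(P, prio, q)`. -/
noncomputable def numBlocking (P : I → List (Option S)) (prio : S → List I) (q : S → ℕ)
    (μ : I → Option S) : ℕ :=
  {i : I | BlockingStudent P prio q μ i}.ncard

/-! ### The Gale–Shapley student-proposing deferred acceptance mechanism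

The state `σ : I → ℕ` records, for each student, how many of her acceptable schools
have already rejected her; she currently applies to the `σ i`-th school on her list
(if any).  At each round every school tentatively keeps the `q s` highest-priority
students among its current applicants and rejects the rest, who move on. -/

/-- The school student `i` currently applies to. -/
def daTarget (P : I → List (Option S)) (σ : I → ℕ) (i : I) : Option S :=
  (acceptables (P i))[σ i]?

/-- The students tentatively held by school `s`: the `q s` highest-priority current
applicants. -/
def daHeld (P : I → List (Option S)) (prio : S → List I) (q : S → ℕ)
    (σ : I → ℕ) (s : S) : List I :=
  ((prio s).filter (fun i => decide (daTarget P σ i = some s))).take (q s)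

/-- One round of deferred acceptance: every rejected student moves to her next choice. -/
def daStep (P : I → List (Option S)) (prio : S → List I) (q : S → ℕ)
    (σ : I → ℕ) : I → ℕ := fun i =>
  match daTarget P σ i with
  | none => σ i
  | some s => if i ∈ daHeld P prio q σ s then σ i else σ i + 1

/-- The Gale–Shapley (student-proposing deferred acceptance) mechanism.  Iterating the
round map `|I| * |S| + 1` times is guaranteed to reach the terminal state. -/
def GS (P : I → List (Option S)) (prio : S → List I) (q : S → ℕ) : I → Option S :=
  fun i =>
    let σ := (daStep P prio q)^[Fintype.card I * Fintype.card S + 1] (fun _ => 0)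
    match daTarget P σ i with
    | none => none
    | some s => if i ∈ daHeld P prio q σ s then some s else none

/-- The constrained Gale–Shapley mechanism `GS^k`. -/
def GSk (k : ℕ) (P : I → List (Option S)) (prio : S → List I) (q : S → ℕ) : I → Option S :=
  GS (fun i => truncate (P i) k) prio q

/-! ### The Boston (immediate acceptance) mechanism -/

/-- Round `t` of the Boston mechanism: each not-yet-accepted student applies to her
`t`-th ranked acceptable school (0-indexed), and each school permanently accepts, up to
its remaining capacity, its highest-priority new applicants. -/
def bostonRound (P : I → List (Option S)) (prio : S → List I) (q : S → ℕ)
    (μ : I → Option S) (t : ℕ) : I → Option S := fun i =>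
  match μ i with
  | some s => some s
  | none =>
    match (acceptables (P i))[t]? with
    | none => none
    | some s =>
      if i ∈ ((prio s).filter
            (fun j => decide (μ j = none ∧ (acceptables (P j))[t]? = some s))).take
          (q s - (Finset.univ.filter (fun j => μ j = some s)).card)
      then some s else none

/-- The Boston (immediate acceptance) mechanism. -/
def Boston (P : I → List (Option S)) (prio : S → List I) (q : S → ℕ) : I → Option S :=
  (List.range (Fintype.card S)).foldl (bostonRound P prio q) (fun _ => none)

/-- The constrained Boston mechanism `β^k`. -/
def Bostonk (k : ℕ) (P : I → List (Option S)) (prio : S → List I) (q : S → ℕ) :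
    I → Option S :=
  Boston (fun i => truncate (P i) k) prio q

/-! ### The first-preference-first mechanism -/

/-- The adjusted priority profile: each first-preference-first school (member of `fpf`)
ranks students first by the rank they assign to it under `P` (counting the ranking of the
outside option as well), ties broken by the original priority; equal-preference schools
keep their original priority. -/
def fpfPrio (fpf : Finset S) (P : I → List (Option S)) (prio : S → List I) : S → List I :=
  fun s =>
    if s ∈ fpf then
      (List.range (Fintype.card S + 1)).flatMap
        (fun r => (prio s).filter (fun i => decide ((P i).idxOf (some s) = r)))
    else prio s

/-- The first-preference-first mechanism with set `fpf` of first-preference-first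
schools: Gale–Shapley run on the adjusted priorities. -/
def FPF (fpf : Finset S) (P : I → List (Option S)) (prio : S → List I) (q : S → ℕ) :
    I → Option S :=
  GS P (fpfPrio fpf P prio) q

/-- The constrained first-preference-first mechanism `FPF^k`. -/
def FPFk (fpf : Finset S) (k : ℕ) (P : I → List (Option S)) (prio : S → List I)
    (q : S → ℕ) : I → Option S :=
  FPF fpf (fun i => truncate (P i) k) prio q

/-! ### Manipulation and equilibrium notions -/

/-- Student `i` is a manipulating student of the mechanism `φ` (with priorities and
capacities fixed) at the true profile `P`. -/
def ManipulatingStudent (φ : (I → List (Option S)) → I → Option S)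
    (P : I → List (Option S)) (i : I) : Prop :=
  ∃ Q : List (Option S), ValidPref Q ∧
    prefLt (P i) (φ (Function.update P i Q) i) (φ P i)

/-- The mechanism `φ` is not manipulable at `P`. -/
def NotManipulable (φ : (I → List (Option S)) → I → Option S)
    (P : I → List (Option S)) : Prop :=
  ∀ i : I, ¬ ManipulatingStudent φ P i

/-- `P'` is a Nash equilibrium of the game `(φ, P)` in which the sophisticated students
are the members of `M` (who may misreport, and best respond) and all other (sincere)
students report truthfully. -/
def NashEq (φ : (I → List (Option S)) → I → Option S) (P : I → List (Option S))
    (M : Finset I) (P' : I → List (Option S)) : Prop :=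
  (∀ i, ValidPref (P' i)) ∧ (∀ i ∉ M, P' i = P i) ∧
    ∀ i ∈ M, ∀ Q : List (Option S), ValidPref Q →
      ¬ prefLt (P i) (φ (Function.update P' i Q) i) (φ P' i)

/-! ### Semi-sophisticated students -/

/-- Student `i` is guaranteed her first choice `s`: `s` is her most-preferred acceptable
school and `i` is among the `q s` highest-priority students at `s`. -/
def GuaranteedFirstChoice (P : I → List (Option S)) (prio : S → List I) (q : S → ℕ)
    (i : I) (s : S) : Prop :=
  (acceptables (P i)).head? = some s ∧ (prio s).idxOf i < q s

instance (P : I → List (Option S)) (prio : S → List I) (q : S → ℕ) (i : I) (s : S) :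
    Decidable (GuaranteedFirstChoice P prio q i s) :=
  inferInstanceAs (Decidable (_ ∧ _))

/-- School `s` is competitive: at least `q s` students are guaranteed their first
choice `s`. -/
def Competitive (P : I → List (Option S)) (prio : S → List I) (q : S → ℕ) (s : S) : Prop :=
  q s ≤ (Finset.univ.filter (fun i => GuaranteedFirstChoice P prio q i s)).card

instance (P : I → List (Option S)) (prio : S → List I) (q : S → ℕ) (s : S) :
    Decidable (Competitive P prio q s) :=
  inferInstanceAs (Decidable (_ ≤ _))

/-- `P'` is a Nash equilibrium of the game `(GS^ℓ, P)` with semi-sophisticated students: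
every student guaranteed her first choice reports truthfully; every other student reports
truthfully if she has at most `ℓ` acceptable schools or all her acceptable schools are
competitive, and otherwise lists as acceptable, in the order given by her true preference,
only her acceptable schools that are not competitive. -/
def SemiSophProfile (ℓ : ℕ) (P : I → List (Option S)) (prio : S → List I) (q : S → ℕ)
    (P' : I → List (Option S)) : Prop :=
  ∀ i : I,
    ((∃ s : S, GuaranteedFirstChoice P prio q i s) → P' i = P i) ∧
    (¬ (∃ s : S, GuaranteedFirstChoice P prio q i s) →
      (((acceptables (P i)).length ≤ ℓ ∨ ∀ s ∈ acceptables (P i), Competitive P prio q s) →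
          P' i = P i) ∧
      (¬ ((acceptables (P i)).length ≤ ℓ ∨
            ∀ s ∈ acceptables (P i), Competitive P prio q s) →
          acceptables (P' i) =
            (acceptables (P i)).filter (fun s => decide (¬ Competitive P prio q s))))


theorem obeq : (Option.instBEq : BEq (Option S)) = instBEqOfDecidableEq :=
  lawful_beq_subsingleton _ _

/-! ### generic list index lemmas -/

theorem indexOf_map_some (B : List S) (s : S) :
    (B.map some).idxOf (some s) = B.idxOf s := by
  induction B with
  | nil => rfl
  | cons a l ih =>
    by_cases h : a = s
    · subst h; simp [List.idxOf_cons_self]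
    · rw [List.map_cons, List.idxOf_cons_ne _ (by simpa using h : (some a : Option S) ≠ some s),
        List.idxOf_cons_ne _ h, ih]

theorem indexOf_append_of_not_mem {α : Type*} [DecidableEq α] {a : α} {l₁ l₂ : List α}
    (h : a ∉ l₁) :
    @List.idxOf _ instBEqOfDecidableEq a (l₁ ++ l₂) = l₁.length + l₂.idxOf a := by
  induction l₁ with
  | nil => simp
  | cons b l ih =>
    have hb : b ≠ a := fun hba => h (hba ▸ List.mem_cons_self)
    rw [List.cons_append, List.idxOf_cons_ne _ hb, ih (fun hm => h (List.mem_cons_of_mem _ hm)),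
      List.length_cons]
    omega

theorem indexOf_take {α : Type*} [DecidableEq α] {a : α} {l : List α} {k : ℕ}
    (h : a ∈ l.take k) :
    @List.idxOf _ instBEqOfDecidableEq a l = @List.idxOf _ instBEqOfDecidableEq a (l.take k) := by
  conv_lhs => rw [← List.take_append_drop k l]
  exact List.idxOf_append_of_mem h

theorem mem_take_of_indexOf_lt {α : Type*} [DecidableEq α] {a : α} {l : List α} {k : ℕ}
    (hm : a ∈ l) (h : @List.idxOf _ instBEqOfDecidableEq a l < k) : a ∈ l.take k := by
  have hlt : @List.idxOf _ instBEqOfDecidableEq a l < l.length := List.idxOf_lt_length_iff.mpr hm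
  have hk : @List.idxOf _ instBEqOfDecidableEq a l < (l.take k).length := by simp; omega
  have : (l.take k)[@List.idxOf _ instBEqOfDecidableEq a l]'hk = a := by
    rw [List.getElem_take]; exact List.getElem_idxOf hlt
  exact this ▸ List.getElem_mem hk

theorem indexOf_take_lt {α : Type*} [DecidableEq α] {a : α} {l : List α} {k : ℕ}
    (h : a ∈ l.take k) : @List.idxOf _ instBEqOfDecidableEq a l < k := by
  rw [indexOf_take h]
  calc @List.idxOf _ instBEqOfDecidableEq a (l.take k) < (l.take k).length :=
        List.idxOf_lt_length_iff.mpr h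
    _ ≤ k := by simpa using List.length_take_le k l

/-- order is preserved between a nodup list and a sublist of it. -/
theorem sublist_indexOf_lt_iff {α : Type*} [DecidableEq α] {l L : List α}
    (hn : l.Nodup) (hs : List.Sublist L l) {a b : α} (ha : a ∈ L) (hb : b ∈ L) :
    @List.idxOf _ instBEqOfDecidableEq a L < @List.idxOf _ instBEqOfDecidableEq b L ↔
      @List.idxOf _ instBEqOfDecidableEq a l < @List.idxOf _ instBEqOfDecidableEq b l := by
  have key : ∀ (M : List α), List.Sublist M l → ∀ x y, x ∈ M → y ∈ M →
      @List.idxOf _ instBEqOfDecidableEq x M < @List.idxOf _ instBEqOfDecidableEq y M →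
      @List.idxOf _ instBEqOfDecidableEq x l < @List.idxOf _ instBEqOfDecidableEq y l := by
    intro M hM x y hx hy hlt
    have hpl : l.Pairwise (fun u v => @List.idxOf _ instBEqOfDecidableEq u l <
        @List.idxOf _ instBEqOfDecidableEq v l) := by
      rw [List.pairwise_iff_getElem]
      intro i j hi hj hij
      rw [List.Nodup.idxOf_getElem hn i hi, List.Nodup.idxOf_getElem hn j hj]; exact hij
    have hpM := hpl.sublist hM
    rw [List.pairwise_iff_getElem] at hpM
    have hxl : @List.idxOf _ instBEqOfDecidableEq x M < M.length := List.idxOf_lt_length_iff.mpr hx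
    have hyl : @List.idxOf _ instBEqOfDecidableEq y M < M.length := List.idxOf_lt_length_iff.mpr hy
    have := hpM _ _ hxl hyl hlt
    rwa [List.getElem_idxOf hxl, List.getElem_idxOf hyl] at this
  constructor
  · exact fun h => key L hs a b ha hb h
  · intro h
    rcases lt_trichotomy (@List.idxOf _ instBEqOfDecidableEq a L)
      (@List.idxOf _ instBEqOfDecidableEq b L) with h1 | h1 | h1
    · exact h1
    · exfalso
      have : a = b := by
        have h2 := List.getElem_idxOf (List.idxOf_lt_length_iff.mpr ha)
        have h3 := List.getElem_idxOf (List.idxOf_lt_length_iff.mpr hb)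
        rw [← h2, ← h3]; congr 1
      subst this; omega
    · exact absurd h (by have := key L hs b a hb ha h1; omega)

/-! ### structure of valid preference lists -/

/-- index facts for a list of the shape `B.map some ++ none :: rest`. -/
theorem shape_indexOf_some_of_mem {B : List S} {rest : List (Option S)} {s : S} (h : s ∈ B) :
    (B.map some ++ none :: rest).idxOf (some s) = B.idxOf s := by
  rw [List.idxOf_append_of_mem (by simpa using h)]
  rw [indexOf_map_some]

theorem shape_indexOf_none {B : List S} {rest : List (Option S)} :
    (B.map some ++ none :: rest).idxOf none = B.length := by
  rw [obeq, indexOf_append_of_not_mem (by simp), @List.idxOf_cons_eq _ instBEqOfDecidableEq _ _ _ _ rfl]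
  simp

theorem shape_indexOf_some_of_not_mem {B : List S} {rest : List (Option S)} {s : S} (h : s ∉ B) :
    B.length + 1 ≤ (B.map some ++ none :: rest).idxOf (some s) := by
  rw [obeq, indexOf_append_of_not_mem (by simpa using h)]
  have : @List.idxOf _ instBEqOfDecidableEq (some s) (none :: rest) =
      (@List.idxOf _ instBEqOfDecidableEq (some s) rest).succ :=
    @List.idxOf_cons_ne _ instBEqOfDecidableEq _ _ _ _ (by simp)
  simp [this]

theorem map_some_filterMap_id (l : List (Option S)) (h : ∀ x ∈ l, x.isSome) :
    (l.filterMap id).map some = l := by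
  induction l with
  | nil => rfl
  | cons a t ih =>
    match a, h a (List.mem_cons_self) with
    | some s, _ =>
      simp only [List.filterMap_cons, id]
      exact congrArg (some s :: ·) (ih (fun x hx => h x (List.mem_cons_of_mem _ hx)))

theorem dropWhile_cons_prop {α : Type*} (f : α → Bool) :
    ∀ (l : List α) {a : α} {rest : List α}, l.dropWhile f = a :: rest → f a = false := by
  intro l
  induction l with
  | nil => intro a rest h; simp at h
  | cons b t ih =>
    intro a rest h
    by_cases hb : f b
    · rw [List.dropWhile_cons_of_pos hb] at h; exact ih h
    · rw [List.dropWhile_cons_of_neg hb] at h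
      cases h; simpa using hb

theorem dropWhile_valid {p : List (Option S)} (hp : ValidPref p) :
    ∃ rest, p.dropWhile Option.isSome = none :: rest := by
  have hmem : (none : Option S) ∈ p.dropWhile Option.isSome := by
    have h1 : (none : Option S) ∈ p := hp.2 none
    rcases (List.mem_append.mp (by rw [List.takeWhile_append_dropWhile] at *; exact h1 :
        (none : Option S) ∈ p.takeWhile Option.isSome ++ p.dropWhile Option.isSome)) with h | h
    · exact absurd (List.mem_takeWhile_imp h) (by simp)
    · exact h
  match hd : p.dropWhile Option.isSome with
  | [] => rw [hd] at hmem; simp at hmem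
  | a :: rest =>
    have : Option.isSome a = false := dropWhile_cons_prop _ _ hd
    match a with
    | none => exact ⟨rest, rfl⟩
    | some s => simp at this

/-- decomposition of a valid preference list. -/
theorem valid_decomp {p : List (Option S)} (hp : ValidPref p) :
    ∃ rest, p = (acceptables p).map some ++ none :: rest := by
  obtain ⟨rest, hrest⟩ := dropWhile_valid hp
  refine ⟨rest, ?_⟩
  conv_lhs => rw [← List.takeWhile_append_dropWhile (p := Option.isSome) (l := p)]
  rw [hrest]
  congr 1
  rw [acceptables, map_some_filterMap_id _ (fun x hx => List.mem_takeWhile_imp hx)]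

theorem acceptables_sublist (p : List (Option S)) :
    List.Sublist ((acceptables p).map some) p := by
  have h1 : List.Sublist (p.takeWhile Option.isSome) p := List.takeWhile_sublist _
  have h2 : (p.takeWhile Option.isSome).filterMap id = acceptables p := rfl
  have h3 := map_some_filterMap_id (p.takeWhile Option.isSome)
    (fun x hx => List.mem_takeWhile_imp hx)
  rw [h2] at h3; rw [← h3] at h1; exact h1

theorem acceptables_nodup {p : List (Option S)} (hp : ValidPref p) : (acceptables p).Nodup := by
  have := (acceptables_sublist p).nodup hp.1
  exact this.of_map some

theorem acceptables_length_le {p : List (Option S)} (hp : ValidPref p) :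
    (acceptables p).length ≤ Fintype.card S :=
  (acceptables_nodup hp).length_le_card

/-- membership in acceptables via indexOf comparisons -/
theorem indexOf_some_of_acc {p : List (Option S)} (hp : ValidPref p) {s : S}
    (h : s ∈ acceptables p) : p.idxOf (some s) = (acceptables p).idxOf s := by
  obtain ⟨rest, hd⟩ := valid_decomp hp
  conv_lhs => rw [hd]
  exact shape_indexOf_some_of_mem h

theorem indexOf_none_acc {p : List (Option S)} (hp : ValidPref p) :
    p.idxOf none = (acceptables p).length := by
  obtain ⟨rest, hd⟩ := valid_decomp hp
  conv_lhs => rw [hd]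
  exact shape_indexOf_none

theorem indexOf_some_of_not_acc {p : List (Option S)} (hp : ValidPref p) {s : S}
    (h : s ∉ acceptables p) : (acceptables p).length + 1 ≤ p.idxOf (some s) := by
  obtain ⟨rest, hd⟩ := valid_decomp hp
  conv_rhs => rw [hd]
  exact shape_indexOf_some_of_not_mem h

theorem mem_acc_iff_prefLt_none {p : List (Option S)} (hp : ValidPref p) {s : S} :
    s ∈ acceptables p ↔ prefLt p (some s) none := by
  constructor
  · intro h
    rw [prefLt, indexOf_some_of_acc hp h, indexOf_none_acc hp]
    simpa using List.idxOf_lt_length_iff.mpr h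
  · intro h
    by_contra hn
    have := indexOf_some_of_not_acc hp hn
    rw [prefLt, indexOf_none_acc hp] at h
    omega

theorem prefLt_some_some_iff {p : List (Option S)} (hp : ValidPref p) {s t : S}
    (hs : s ∈ acceptables p) (ht : t ∈ acceptables p) :
    prefLt p (some s) (some t) ↔ (acceptables p).idxOf s < (acceptables p).idxOf t := by
  rw [prefLt, indexOf_some_of_acc hp hs, indexOf_some_of_acc hp ht]

theorem prefLt_total {p : List (Option S)} (hp : ValidPref p) {a b : Option S} (h : a ≠ b) :
    prefLt p a b ∨ prefLt p b a := by
  rcases lt_trichotomy (p.idxOf a) (p.idxOf b) with h1 | h1 | h1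
  · exact Or.inl h1
  · exfalso
    apply h
    have h2 := List.getElem_idxOf (List.idxOf_lt_length_iff.mpr (hp.2 a))
    have h3 := List.getElem_idxOf (List.idxOf_lt_length_iff.mpr (hp.2 b))
    rw [← h2, ← h3]
    congr 1
  · exact Or.inr h1

theorem prefLt_irrefl (p : List (Option S)) (a : Option S) : ¬ prefLt p a a :=
  lt_irrefl _

theorem prefLt_trans {p : List (Option S)} {a b c : Option S}
    (h1 : prefLt p a b) (h2 : prefLt p b c) : prefLt p a c := lt_trans h1 h2

theorem prefLt_asymm {p : List (Option S)} {a b : Option S}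
    (h1 : prefLt p a b) : ¬ prefLt p b a := by rw [prefLt] at *; omega

/-! ### truncation -/

theorem takeWhile_shape (B : List S) (rest : List (Option S)) :
    (B.map some ++ none :: rest).takeWhile Option.isSome = B.map some := by
  induction B with
  | nil => simp [List.takeWhile_cons]
  | cons a t ih => simpa [List.takeWhile_cons] using ih

theorem acceptables_shape (B : List S) (rest : List (Option S)) :
    acceptables (B.map some ++ none :: rest) = B := by
  rw [acceptables, takeWhile_shape]
  simp

theorem acceptables_truncate (p : List (Option S)) (k : ℕ) :
    acceptables (truncate p k) = (acceptables p).take k :=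
  acceptables_shape _ _

theorem truncate_valid {p : List (Option S)} (hp : ValidPref p) (k : ℕ) :
    ValidPref (truncate p k) := by
  constructor
  · rw [truncate]
    refine List.Nodup.append ?_ ?_ ?_
    · exact ((acceptables_nodup hp).sublist (List.take_sublist _ _)).map
        (Option.some_injective S)
    · refine List.Nodup.cons (by simp) ?_
      exact (List.filter_sublist).nodup hp.1
    · intro x hx hy
      rcases List.mem_cons.mp hy with h | h
      · subst h
        rcases List.mem_map.mp hx with ⟨u, _, hu⟩
        cases hu
      · have := List.of_mem_filter h
        simp only [decide_eq_true_eq] at this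
        exact this.2 hx
  · intro x
    rw [truncate]
    match x with
    | none => exact List.mem_append_right _ (List.mem_cons_self)
    | some t =>
      by_cases h : (some t) ∈ ((acceptables p).take k).map some
      · exact List.mem_append_left _ h
      · refine List.mem_append_right _ (List.mem_cons_of_mem _ ?_)
        refine List.mem_filter.mpr ⟨hp.2 _, ?_⟩
        simp only [decide_eq_true_eq]
        exact ⟨by simp, h⟩

theorem truncate_indexOf_some_mem {p : List (Option S)} {k : ℕ} {s : S}
    (h : s ∈ (acceptables p).take k) :
    (truncate p k).idxOf (some s) = ((acceptables p).take k).idxOf s :=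
  shape_indexOf_some_of_mem h

theorem truncate_indexOf_none (p : List (Option S)) (k : ℕ) :
    (truncate p k).idxOf none = ((acceptables p).take k).length :=
  shape_indexOf_none

/-- transfer of strict preference from `p` to `truncate p k` when both entries are
in the truncated range (or `none`). -/
theorem prefLt_truncate_of_prefLt {p : List (Option S)} (hp : ValidPref p) {k : ℕ} {s : S}
    {b : Option S} (hs : s ∈ (acceptables p).take k)
    (hb : b = none ∨ ∃ u ∈ (acceptables p).take k, b = some u)
    (h : prefLt p (some s) b) : prefLt (truncate p k) (some s) b := by
  have hsA : s ∈ acceptables p := List.take_subset _ _ hs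
  rcases hb with rfl | ⟨u, hu, rfl⟩
  · rw [prefLt, truncate_indexOf_some_mem hs, truncate_indexOf_none]
    exact List.idxOf_lt_length_iff.mpr hs
  · have huA : u ∈ acceptables p := List.take_subset _ _ hu
    rw [prefLt_some_some_iff hp hsA huA] at h
    rw [prefLt, truncate_indexOf_some_mem hs, truncate_indexOf_some_mem hu]
    rw [← indexOf_take hs, ← indexOf_take hu]
    exact h

/-- transfer of strict preference from `truncate p k` back to `p`. -/
theorem prefLt_of_prefLt_truncate {p : List (Option S)} (hp : ValidPref p) {k : ℕ}
    {a b : Option S}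
    (hb : b = none ∨ ∃ u ∈ (acceptables p).take k, b = some u)
    (h : prefLt (truncate p k) a b) : prefLt p a b := by
  -- first, a must be `some s` with `s` in the take-k part
  match a with
  | none =>
    exfalso
    rcases hb with rfl | ⟨u, hu, rfl⟩
    · exact prefLt_irrefl _ _ h
    · rw [prefLt, truncate_indexOf_none, truncate_indexOf_some_mem hu] at h
      have := List.idxOf_lt_length_iff.mpr hu
      omega
  | some s =>
    have hs : s ∈ (acceptables p).take k := by
      by_contra hns
      have h1 := shape_indexOf_some_of_not_mem (B := (acceptables p).take k)
        (rest := p.filter (fun x => decide (x ≠ none ∧ x ∉ ((acceptables p).take k).map some)))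
        hns
      rw [truncate] at h
      rcases hb with rfl | ⟨u, hu, rfl⟩
      · rw [prefLt, shape_indexOf_none] at h; omega
      · rw [prefLt, shape_indexOf_some_of_mem hu] at h
        have := List.idxOf_lt_length_iff.mpr hu
        have hlen : ((acceptables p).take k).idxOf u < ((acceptables p).take k).length :=
          List.idxOf_lt_length_iff.mpr hu
        omega
    have hsA : s ∈ acceptables p := List.take_subset _ _ hs
    rcases hb with rfl | ⟨u, hu, rfl⟩
    · exact (mem_acc_iff_prefLt_none hp).mp hsA
    · have huA : u ∈ acceptables p := List.take_subset _ _ hu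
      rw [prefLt, truncate_indexOf_some_mem hs, truncate_indexOf_some_mem hu] at h
      rw [prefLt_some_some_iff hp hsA huA]
      rwa [← indexOf_take hs, ← indexOf_take hu] at h

/-! ### the DA machinery -/

section Run

variable (P : I → List (Option S)) (prio : S → List I) (q : S → ℕ)

/-- the DA state after `n` rounds. -/
def runState (n : ℕ) : I → ℕ := (daStep P prio q)^[n] (fun _ => 0)

theorem runState_succ (n : ℕ) :
    runState P prio q (n + 1) = daStep P prio q (runState P prio q n) := by
  rw [runState, Function.iterate_succ_apply', runState]

/-- one step moves each coordinate by 0 or 1, and a move means a rejection. -/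
theorem daStep_cases (σ : I → ℕ) (i : I) :
    daStep P prio q σ i = σ i ∨
      (daStep P prio q σ i = σ i + 1 ∧ ∃ s, daTarget P σ i = some s ∧
        i ∉ daHeld P prio q σ s) := by
  rw [daStep]
  match ht : daTarget P σ i with
  | none => exact Or.inl rfl
  | some s =>
    by_cases hh : i ∈ daHeld P prio q σ s
    · simp [hh]
    · exact Or.inr ⟨by simp [hh], s, rfl, hh⟩

theorem daStep_le (σ : I → ℕ) (i : I) : σ i ≤ daStep P prio q σ i := by
  rcases daStep_cases P prio q σ i with h | ⟨h, _⟩ <;> omega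

theorem runState_mono {m n : ℕ} (h : m ≤ n) (i : I) :
    runState P prio q m i ≤ runState P prio q n i := by
  induction n with
  | zero =>
    have : m = 0 := by omega
    subst this; exact le_rfl
  | succ n ih =>
    rcases Nat.lt_or_ge m (n+1) with h1 | h1
    · have := ih (by omega)
      rw [runState_succ]
      exact le_trans this (daStep_le _ _ _ _ _)
    · have : m = n + 1 := by omega
      subst this; rfl

theorem runState_bound (hP : ∀ i, ValidPref (P i)) (n : ℕ) (i : I) :
    runState P prio q n i ≤ (acceptables (P i)).length := by
  induction n with
  | zero => simp [runState]
  | succ n ih =>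
    rw [runState_succ]
    rcases daStep_cases P prio q (runState P prio q n) i with h | ⟨h, s, hs, _⟩
    · omega
    · have : runState P prio q n i < (acceptables (P i)).length := by
        by_contra hc
        rw [daTarget, List.getElem?_eq_none (by omega)] at hs
        cases hs
      omega

/-- progress: either fixpoint or total sum grows. -/
theorem fixpoint_reached (hP : ∀ i, ValidPref (P i)) :
    daStep P prio q (runState P prio q (Fintype.card I * Fintype.card S + 1)) =
      runState P prio q (Fintype.card I * Fintype.card S + 1) := by
  set N := Fintype.card I * Fintype.card S + 1 with hN
  -- fixpoints propagate
  have prop : ∀ m n, m ≤ n → daStep P prio q (runState P prio q m) = runState P prio q m →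
      runState P prio q n = runState P prio q m := by
    intro m n hmn hfix
    induction n with
    | zero => have : m = 0 := by omega
              subst this; rfl
    | succ n ih =>
      rcases Nat.lt_or_ge m (n+1) with h1 | h1
      · rw [runState_succ, ih (by omega), hfix]
      · have : m = n + 1 := by omega
        subst this; rfl
  have key : ∀ n : ℕ, (∃ m ≤ n, daStep P prio q (runState P prio q m) = runState P prio q m) ∨
      n ≤ ∑ i : I, runState P prio q n i := by
    intro n
    induction n with
    | zero => exact Or.inr (by omega)
    | succ n ih =>
      rcases ih with ⟨m, hm, hfix⟩ | hsum
      · exact Or.inl ⟨m, by omega, hfix⟩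
      · by_cases hfix : daStep P prio q (runState P prio q n) = runState P prio q n
        · exact Or.inl ⟨n, by omega, hfix⟩
        · right
          have hlt : ∑ i : I, runState P prio q n i < ∑ i : I, runState P prio q (n+1) i := by
            have hne : ∃ i, runState P prio q (n+1) i ≠ runState P prio q n i := by
              by_contra hc
              push_neg at hc
              apply hfix
              funext i
              rw [← runState_succ, hc]
            obtain ⟨i, hi⟩ := hne
            apply Finset.sum_lt_sum
            · intro j _
              rw [runState_succ]; exact daStep_le _ _ _ _ _
            · refine ⟨i, Finset.mem_univ _, ?_⟩
              have h1 : runState P prio q n i ≤ runState P prio q (n + 1) i :=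
                runState_mono P prio q (by omega) i
              omega
          omega
  rcases key N with ⟨m, hm, hfix⟩ | hsum
  · rw [prop m N hm hfix, hfix, ← prop m N hm hfix]
  · exfalso
    have hb : ∑ i : I, runState P prio q N i ≤ Fintype.card I * Fintype.card S := by
      calc ∑ i : I, runState P prio q N i ≤ ∑ _i : I, Fintype.card S := by
            apply Finset.sum_le_sum
            intro i _
            exact le_trans (runState_bound P prio q hP N i) (acceptables_length_le (hP i))
        _ = Fintype.card I * Fintype.card S := by
            rw [Finset.sum_const, Finset.card_univ, smul_eq_mul]
    omega

end Run

section Run2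

variable (P : I → List (Option S)) (prio : S → List I) (q : S → ℕ)

/-- the terminal state of the run. -/
def finalState : I → ℕ := runState P prio q (Fintype.card I * Fintype.card S + 1)

theorem finalState_fix (hP : ∀ i, ValidPref (P i)) :
    daStep P prio q (finalState P prio q) = finalState P prio q :=
  fixpoint_reached P prio q hP

theorem runState_eq_final (hP : ∀ i, ValidPref (P i)) {n : ℕ}
    (h : Fintype.card I * Fintype.card S + 1 ≤ n) :
    runState P prio q n = finalState P prio q := by
  set N := Fintype.card I * Fintype.card S + 1
  induction n with
  | zero => omega
  | succ n ih =>
    rcases Nat.lt_or_ge n N with h1 | h1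
    · have : n + 1 = N := by omega
      rw [this]; rfl
    · rw [runState_succ, ih (by omega), finalState_fix P prio q hP]

theorem GS_def (j : I) :
    GS P prio q j = (match daTarget P (finalState P prio q) j with
      | none => none
      | some s => if j ∈ daHeld P prio q (finalState P prio q) s then some s else none) := rfl

theorem GS_eq_some {j : I} {s : S} :
    GS P prio q j = some s ↔ daTarget P (finalState P prio q) j = some s ∧
      j ∈ daHeld P prio q (finalState P prio q) s := by
  rw [GS_def]
  constructor
  · intro h
    match ht : daTarget P (finalState P prio q) j with
    | none => simp only [ht] at h; cases h
    | some t =>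
      simp only [ht] at h
      by_cases hh : j ∈ daHeld P prio q (finalState P prio q) t
      · simp only [hh, if_true] at h
        obtain rfl : t = s := Option.some.inj h
        exact ⟨rfl, hh⟩
      · simp only [hh, if_false] at h; cases h
  · rintro ⟨ht, hh⟩
    simp only [ht, hh, if_true]

theorem GS_eq_none {j : I} :
    GS P prio q j = none ↔ ∀ s : S, ¬ (daTarget P (finalState P prio q) j = some s ∧
      j ∈ daHeld P prio q (finalState P prio q) s) := by
  constructor
  · intro h s hs
    have : GS P prio q j = some s := (GS_eq_some P prio q).mpr hs
    rw [h] at this; cases this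
  · intro h
    match hg : GS P prio q j with
    | none => rfl
    | some s => exact absurd ((GS_eq_some P prio q).mp hg) (h s)

/-- at the fixpoint, every applicant is held. -/
theorem final_held (hP : ∀ i, ValidPref (P i)) {j : I} {s : S}
    (ht : daTarget P (finalState P prio q) j = some s) :
    j ∈ daHeld P prio q (finalState P prio q) s := by
  by_contra hh
  have hfix := congrFun (finalState_fix P prio q hP) j
  rw [daStep] at hfix
  simp only [ht, hh, if_false] at hfix
  omega

theorem GS_eq_target (hP : ∀ i, ValidPref (P i)) (j : I) :
    GS P prio q j = daTarget P (finalState P prio q) j := by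
  match ht : daTarget P (finalState P prio q) j with
  | none => rw [GS_eq_none]; intro s hs; rw [ht] at hs; cases hs.1
  | some s => rw [GS_eq_some]; exact ⟨ht, final_held P prio q hP ht⟩

theorem mem_held_target {σ : I → ℕ} {j : I} {s : S} (h : j ∈ daHeld P prio q σ s) :
    daTarget P σ j = some s ∧ j ∈ prio s := by
  have h1 : j ∈ (prio s).filter (fun i => decide (daTarget P σ i = some s)) :=
    List.mem_of_mem_take h
  exact ⟨by simpa using List.of_mem_filter h1, List.mem_of_mem_filter h1⟩

theorem held_nodup {σ : I → ℕ} {s : S} (hs : (prio s).Nodup) :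
    (daHeld P prio q σ s).Nodup :=
  ((hs.filter _).sublist (List.take_sublist _ _))

theorem held_length_le (σ : I → ℕ) (s : S) : (daHeld P prio q σ s).length ≤ q s := by
  rw [daHeld]
  simpa using List.length_take_le _ _

/-- the outcome of `GS` lands in the acceptable list. -/
theorem GS_mem_acceptables {j : I} {s : S} (h : GS P prio q j = some s) :
    s ∈ acceptables (P j) := by
  have := ((GS_eq_some P prio q).mp h).1
  rw [daTarget] at this
  exact List.mem_of_getElem? this

end Run2

section Run3

variable (P : I → List (Option S)) (prio : S → List I) (q : S → ℕ)

theorem target_mem_filter {σ : I → ℕ} {j : I} {s : S} (hj : j ∈ prio s)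
    (ht : daTarget P σ j = some s) :
    j ∈ (prio s).filter (fun i => decide (daTarget P σ i = some s)) :=
  List.mem_filter.mpr ⟨hj, by simpa using ht⟩

/-- a rejected applicant sees a full class of higher-priority students. -/
theorem rejected_full {σ : I → ℕ} {j : I} {s : S}
    (hns : (prio s).Nodup) (hj : j ∈ prio s)
    (ht : daTarget P σ j = some s) (hh : j ∉ daHeld P prio q σ s) :
    (daHeld P prio q σ s).length = q s ∧
      ∀ h ∈ daHeld P prio q σ s, prioLt (prio s) h j := by
  set L := (prio s).filter (fun i => decide (daTarget P σ i = some s)) with hL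
  have hjL : j ∈ L := target_mem_filter P prio hj ht
  have hLn : L.Nodup := hns.filter _
  have hqL : q s < L.length := by
    by_contra hc
    push_neg at hc
    rw [daHeld, ← hL, List.take_of_length_le hc] at hh
    exact hh hjL
  constructor
  · rw [daHeld, ← hL, List.length_take]; omega
  · intro h hhh
    have hhL : h ∈ L := List.mem_of_mem_take hhh
    have hidxh : L.idxOf h < q s := indexOf_take_lt hhh
    have hidxj : q s ≤ L.idxOf j := by
      by_contra hc
      push_neg at hc
      exact hh (mem_take_of_indexOf_lt hjL hc)
    rw [prioLt]
    have hfold : L.idxOf h < L.idxOf j := by omega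
    exact (sublist_indexOf_lt_iff hns (List.filter_sublist) hhL hjL).mp hfold

/-- the "once full with better students, always so" invariant. -/
def Inv (σ : I → ℕ) (s : S) (j : I) : Prop :=
  (daHeld P prio q σ s).length = q s ∧ ∀ h ∈ daHeld P prio q σ s, prioLt (prio s) h j

theorem held_subset_next_filter {σ : I → ℕ} {s : S} {h : I}
    (hh : h ∈ daHeld P prio q σ s) :
    h ∈ (prio s).filter (fun i => decide (daTarget P (daStep P prio q σ) i = some s)) := by
  obtain ⟨ht, hp⟩ := mem_held_target P prio q hh
  have hstep : daStep P prio q σ h = σ h := by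
    simp [daStep, ht, hh]
  have : daTarget P (daStep P prio q σ) h = some s := by
    rw [daTarget, hstep]; exact ht
  exact List.mem_filter.mpr ⟨hp, by simpa using this⟩

theorem inv_step {σ : I → ℕ} {s : S} {j : I} (hns : (prio s).Nodup)
    (h : Inv P prio q σ s j) : Inv P prio q (daStep P prio q σ) s j := by
  obtain ⟨hlen, hall⟩ := h
  set L := (prio s).filter (fun i => decide (daTarget P (daStep P prio q σ) i = some s)) with hL
  have hLn : L.Nodup := hns.filter _
  have hsub : ∀ h ∈ daHeld P prio q σ s, h ∈ L := fun h hh =>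
    held_subset_next_filter P prio q hh
  -- the old held students give `q s` distinct members of L
  have hcard : q s ≤ L.length := by
    have h1 : (daHeld P prio q σ s).toFinset ⊆ L.toFinset := by
      intro x hx
      rw [List.mem_toFinset] at *
      exact hsub x hx
    have h2 : (daHeld P prio q σ s).toFinset.card = q s := by
      rw [List.toFinset_card_of_nodup (held_nodup P prio q hns)]; exact hlen
    calc q s = (daHeld P prio q σ s).toFinset.card := h2.symm
      _ ≤ L.toFinset.card := Finset.card_le_card h1
      _ ≤ L.length := L.toFinset_card_le
  constructor
  · rw [daHeld, ← hL, List.length_take]; omega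
  · intro x hx
    by_contra hc
    rw [prioLt] at hc
    push_neg at hc
    have hxL : x ∈ L := List.mem_of_mem_take hx
    have hxlt : L.idxOf x < q s := indexOf_take_lt hx
    -- all old held students appear before x in L
    have hbefore : ∀ h ∈ daHeld P prio q σ s, L.idxOf h < L.idxOf x := by
      intro h hh
      have h1 : prioLt (prio s) h j := hall h hh
      rw [prioLt] at h1
      rw [sublist_indexOf_lt_iff hns (List.filter_sublist) (hsub h hh) hxL]
      omega
    -- so x's index is at least q s, a contradiction
    have : q s ≤ L.idxOf x := by
      have hinj : Set.InjOn (fun h => L.idxOf h) ((daHeld P prio q σ s).toFinset : Set I) := by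
        intro a ha b hb hab
        simp only at hab
        simp only [Finset.mem_coe, List.mem_toFinset] at ha hb
        have h2 := List.getElem_idxOf (List.idxOf_lt_length_iff.mpr (hsub a ha))
        have h3 := List.getElem_idxOf (List.idxOf_lt_length_iff.mpr (hsub b hb))
        rw [← h2, ← h3]
        congr 1
      have himg : ((daHeld P prio q σ s).toFinset.image (fun h => L.idxOf h)) ⊆
          Finset.range (L.idxOf x) := by
        intro m hm
        rw [Finset.mem_image] at hm
        obtain ⟨a, ha, rfl⟩ := hm
        rw [Finset.mem_range]
        exact hbefore a (List.mem_toFinset.mp ha)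
      have hcard2 : ((daHeld P prio q σ s).toFinset.image (fun h => L.idxOf h)).card = q s := by
        rw [Finset.card_image_of_injOn (by simpa using hinj),
          List.toFinset_card_of_nodup (held_nodup P prio q hns)]
        exact hlen
      have := Finset.card_le_card himg
      rw [hcard2, Finset.card_range] at this
      exact this
    omega

theorem inv_persist {n m : ℕ} {s : S} {j : I} (hns : (prio s).Nodup) (hnm : n ≤ m)
    (h : Inv P prio q (runState P prio q n) s j) :
    Inv P prio q (runState P prio q m) s j := by
  induction m with
  | zero =>
    have : n = 0 := by omega
    subst this; exact h
  | succ m ih =>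
    rcases Nat.lt_or_ge n (m+1) with h1 | h1
    · rw [runState_succ]
      exact inv_step P prio q hns (ih (by omega))
    · have : n = m + 1 := by omega
      subst this; exact h

/-- discrete intermediate value: each value below the final state was once current and
was incremented, i.e. the student was rejected there. -/
theorem exists_rejection (hP : ∀ i, ValidPref (P i)) {i : I} {v : ℕ}
    (hv : v < finalState P prio q i) :
    ∃ n < Fintype.card I * Fintype.card S + 1,
      runState P prio q n i = v ∧ runState P prio q (n+1) i = v + 1 := by
  set N := Fintype.card I * Fintype.card S + 1 with hN
  have key : ∀ m : ℕ, v < runState P prio q m i →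
      ∃ n < m, runState P prio q n i = v ∧ runState P prio q (n+1) i = v + 1 := by
    intro m
    induction m with
    | zero => intro h; rw [runState] at h; simp at h
    | succ m ih =>
      intro h
      rcases Nat.lt_or_ge v (runState P prio q m i) with h1 | h1
      · obtain ⟨n, hn, h2⟩ := ih h1
        exact ⟨n, by omega, h2⟩
      · have h3 := runState_succ P prio q m
        have h4 : runState P prio q (m+1) i = runState P prio q m i ∨
            runState P prio q (m+1) i = runState P prio q m i + 1 := by
          rw [h3]
          rcases daStep_cases P prio q (runState P prio q m) i with h5 | ⟨h5, _⟩
          · exact Or.inl h5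
          · exact Or.inr h5
        exact ⟨m, by omega, by omega, by omega⟩
  exact key N hv

/-- a student was rejected at step n: the data. -/
theorem rejection_data {i : I} {n : ℕ}
    (h : runState P prio q (n+1) i = runState P prio q n i + 1) :
    ∃ s, daTarget P (runState P prio q n) i = some s ∧
      i ∉ daHeld P prio q (runState P prio q n) s := by
  rcases daStep_cases P prio q (runState P prio q n) i with h1 | ⟨_, s, hs, hh⟩
  · rw [runState_succ] at h; omega
  · exact ⟨s, hs, hh⟩

end Run3

section Run4

variable (P : I → List (Option S)) (prio : S → List I) (q : S → ℕ)

theorem matched_iff_held (hP : ∀ i, ValidPref (P i)) (hprio : ∀ s, ValidPrio (prio s))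
    {j : I} {s : S} :
    GS P prio q j = some s ↔ j ∈ daHeld P prio q (finalState P prio q) s := by
  constructor
  · intro h; exact ((GS_eq_some P prio q).mp h).2
  · intro h
    rw [GS_eq_some]
    exact ⟨(mem_held_target P prio q h).1, h⟩

theorem GS_isMatching (hprioN : ∀ s, (prio s).Nodup) : IsMatching q (GS P prio q) := by
  intro s
  have hsub : Finset.univ.filter (fun j => GS P prio q j = some s) ⊆
      (daHeld P prio q (finalState P prio q) s).toFinset := by
    intro j hj
    rw [Finset.mem_filter] at hj
    rw [List.mem_toFinset]
    exact ((GS_eq_some P prio q).mp hj.2).2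
  calc (Finset.univ.filter (fun j => GS P prio q j = some s)).card
      ≤ (daHeld P prio q (finalState P prio q) s).toFinset.card := Finset.card_le_card hsub
    _ ≤ (daHeld P prio q (finalState P prio q) s).length := List.toFinset_card_le _
    _ ≤ q s := held_length_le P prio q _ s

theorem GS_IR (hP : ∀ i, ValidPref (P i)) : IndividuallyRational P (GS P prio q) := by
  intro i
  match hg : GS P prio q i with
  | none => exact prefLt_irrefl _ _
  | some s =>
    have hs := GS_mem_acceptables P prio q hg
    have h1 := (mem_acc_iff_prefLt_none (hP i)).mp hs
    rw [prefLt] at *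
    omega

/-- index of the final match in the acceptable list. -/
theorem final_index (hP : ∀ i, ValidPref (P i)) {i : I} {u : S}
    (h : GS P prio q i = some u) :
    finalState P prio q i = (acceptables (P i)).idxOf u ∧ u ∈ acceptables (P i) := by
  have ht := ((GS_eq_some P prio q).mp h).1
  rw [daTarget] at ht
  rw [List.getElem?_eq_some_iff] at ht
  obtain ⟨hlt, hget⟩ := ht
  constructor
  · rw [← hget, List.Nodup.idxOf_getElem (acceptables_nodup (hP i)) _ hlt]
  · rw [← hget]; exact List.getElem_mem hlt

theorem final_unmatched (hP : ∀ i, ValidPref (P i)) {i : I}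
    (h : GS P prio q i = none) :
    (acceptables (P i)).length ≤ finalState P prio q i := by
  rw [GS_eq_target P prio q hP, daTarget] at h
  by_contra hc
  push_neg at hc
  rw [List.getElem?_eq_getElem hc] at h
  cases h

/-- the key consequence: if `i` strictly prefers `s` to her GS outcome (and `s` is
acceptable), then at the end `s` is full with students all of higher priority than `i`. -/
theorem better_school_full (hP : ∀ i, ValidPref (P i)) (hprio : ∀ s, ValidPrio (prio s))
    {i : I} {s : S} (hpref : prefLt (P i) (some s) (GS P prio q i)) :
    (daHeld P prio q (finalState P prio q) s).length = q s ∧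
      (∀ h ∈ daHeld P prio q (finalState P prio q) s, prioLt (prio s) h i) ∧
      s ∈ acceptables (P i) := by
  have hsacc : s ∈ acceptables (P i) := by
    rw [mem_acc_iff_prefLt_none (hP i)]
    match hg : GS P prio q i with
    | none => rw [hg] at hpref; exact hpref
    | some u =>
      rw [hg] at hpref
      have hu := (final_index P prio q hP hg).2
      have h1 : (P i).idxOf (some u) < (P i).idxOf none := by
        rw [indexOf_some_of_acc (hP i) hu, indexOf_none_acc (hP i)]
        exact List.idxOf_lt_length_iff.mpr hu
      rw [prefLt] at *
      omega
  have hv : (acceptables (P i)).idxOf s < finalState P prio q i := by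
    match hg : GS P prio q i with
    | none =>
      have h1 := final_unmatched P prio q hP hg
      have h2 : (acceptables (P i)).idxOf s < (acceptables (P i)).length :=
        List.idxOf_lt_length_iff.mpr hsacc
      omega
    | some u =>
      obtain ⟨hfi, hu⟩ := final_index P prio q hP hg
      rw [hg] at hpref
      rw [prefLt, indexOf_some_of_acc (hP i) hsacc, indexOf_some_of_acc (hP i) hu] at hpref
      omega
  obtain ⟨n, hn, h1, h2⟩ := exists_rejection P prio q hP hv
  obtain ⟨t, ht, hth⟩ := rejection_data P prio q (by omega :
    runState P prio q (n+1) i = runState P prio q n i + 1)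
  have hts : t = s := by
    rw [daTarget, h1] at ht
    have h3 : (acceptables (P i))[(acceptables (P i)).idxOf s]? = some s := by
      rw [List.getElem?_eq_getElem (List.idxOf_lt_length_iff.mpr hsacc)]
      rw [List.getElem_idxOf]
    rw [h3] at ht
    exact (Option.some.inj ht).symm
  subst hts
  have hrej := rejected_full P prio q ((hprio t).1) ((hprio t).2 i)
    (by rw [daTarget, h1]
        rw [List.getElem?_eq_getElem (List.idxOf_lt_length_iff.mpr hsacc)]
        rw [List.getElem_idxOf]) hth
  have hinv : Inv P prio q (runState P prio q n) t i := hrej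
  have hfin : Inv P prio q (runState P prio q (Fintype.card I * Fintype.card S + 1)) t i :=
    inv_persist P prio q ((hprio t).1) (by omega) hinv
  exact ⟨hfin.1, hfin.2, hsacc⟩

/-- stability of the Gale–Shapley outcome. -/
theorem GS_stable (hP : ∀ i, ValidPref (P i)) (hprio : ∀ s, ValidPrio (prio s)) :
    IsStable P prio q (GS P prio q) := by
  refine ⟨GS_IR P prio q hP, ?_⟩
  rintro i ⟨s, hpref, hcond⟩
  obtain ⟨hlen, hall, hsacc⟩ := better_school_full P prio q hP hprio hpref
  -- the matched set of s is exactly the held list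
  have hset : Finset.univ.filter (fun j => GS P prio q j = some s) =
      (daHeld P prio q (finalState P prio q) s).toFinset := by
    ext j
    rw [Finset.mem_filter, List.mem_toFinset]
    constructor
    · intro h; exact (matched_iff_held P prio q hP hprio).mp h.2
    · intro h; exact ⟨Finset.mem_univ _, (matched_iff_held P prio q hP hprio).mpr h⟩
  have hcard : (Finset.univ.filter (fun j => GS P prio q j = some s)).card = q s := by
    rw [hset, List.toFinset_card_of_nodup (held_nodup P prio q ((hprio s).1))]
    exact hlen
  rcases hcond with h | ⟨j, hj, hij⟩
  · omega
  · have hjh : j ∈ daHeld P prio q (finalState P prio q) s :=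
      (matched_iff_held P prio q hP hprio).mp hj
    have := hall j hjh
    rw [prioLt] at *
    omega

end Run4

section BlockingLemma

variable (P : I → List (Option S)) (prio : S → List I) (q : S → ℕ)

/-- if `i` strictly prefers acceptable `s` to her GS outcome, she was rejected by `s`
at some round `< N`. -/
theorem rejected_by_better (hP : ∀ i, ValidPref (P i)) {i : I} {s : S}
    (hpref : prefLt (P i) (some s) (GS P prio q i)) :
    s ∈ acceptables (P i) ∧ ∃ n < Fintype.card I * Fintype.card S + 1,
      daTarget P (runState P prio q n) i = some s ∧
      i ∉ daHeld P prio q (runState P prio q n) s := by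
  have hsacc : s ∈ acceptables (P i) := by
    rw [mem_acc_iff_prefLt_none (hP i)]
    match hg : GS P prio q i with
    | none => rw [hg] at hpref; exact hpref
    | some u =>
      rw [hg] at hpref
      have hu := (final_index P prio q hP hg).2
      have h1 : (P i).idxOf (some u) < (P i).idxOf none := by
        rw [indexOf_some_of_acc (hP i) hu, indexOf_none_acc (hP i)]
        exact List.idxOf_lt_length_iff.mpr hu
      rw [prefLt] at *
      omega
  have hv : (acceptables (P i)).idxOf s < finalState P prio q i := by
    match hg : GS P prio q i with
    | none =>
      have h1 := final_unmatched P prio q hP hg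
      have h2 : (acceptables (P i)).idxOf s < (acceptables (P i)).length :=
        List.idxOf_lt_length_iff.mpr hsacc
      omega
    | some u =>
      obtain ⟨hfi, hu⟩ := final_index P prio q hP hg
      rw [hg] at hpref
      rw [prefLt, indexOf_some_of_acc (hP i) hsacc, indexOf_some_of_acc (hP i) hu] at hpref
      omega
  obtain ⟨n, hn, h1, h2⟩ := exists_rejection P prio q hP hv
  obtain ⟨t, ht, hth⟩ := rejection_data P prio q (by omega :
    runState P prio q (n+1) i = runState P prio q n i + 1)
  have hts : t = s := by
    rw [daTarget, h1] at ht
    have h3 : (acceptables (P i))[(acceptables (P i)).idxOf s]? = some s := by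
      rw [List.getElem?_eq_getElem (List.idxOf_lt_length_iff.mpr hsacc)]
      rw [List.getElem_idxOf]
    rw [h3] at ht
    exact (Option.some.inj ht).symm
  subst hts
  exact ⟨hsacc, n, hn, ht, hth⟩

/-- no rejections happen at or after the terminal round. -/
theorem no_late_rejection (hP : ∀ i, ValidPref (P i)) {n : ℕ} {j : I} {t : S}
    (hn : Fintype.card I * Fintype.card S + 1 ≤ n)
    (ht : daTarget P (runState P prio q n) j = some t)
    (hh : j ∉ daHeld P prio q (runState P prio q n) t) : False := by
  have h1 : runState P prio q n = finalState P prio q := runState_eq_final P prio q hP hn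
  rw [h1] at ht hh
  exact hh (final_held P prio q hP ht)

open scoped Classical in
/-- **Blocking Lemma** (many-to-one, students' side). -/
theorem blocking_lemma (hP : ∀ i, ValidPref (P i)) (hprio : ∀ s, ValidPrio (prio s))
    (ν : I → Option S) (hν : IsMatching q ν)
    (hB : ∃ j, prefLt (P j) (ν j) (GS P prio q j)) :
    ∃ x t, ¬ prefLt (P x) (ν x) (GS P prio q x) ∧ Blocks P prio q ν x t := by
  set N := Fintype.card I * Fintype.card S + 1 with hN
  set μ := GS P prio q with hμ
  set B : Finset I := Finset.univ.filter (fun j => prefLt (P j) (ν j) (μ j)) with hBdef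
  have hBne : B.Nonempty := by
    obtain ⟨j, hj⟩ := hB
    exact ⟨j, by rw [hBdef, Finset.mem_filter]; exact ⟨Finset.mem_univ _, hj⟩⟩
  have hmemB : ∀ j, j ∈ B ↔ prefLt (P j) (ν j) (μ j) := by
    intro j; rw [hBdef, Finset.mem_filter]; simp
  -- (a) every member of B is ν-matched to an acceptable school
  have haux : ∀ j ∈ B, ∃ t, ν j = some t ∧ prefLt (P j) (some t) (μ j) := by
    intro j hj
    rw [hmemB] at hj
    match hnu : ν j with
    | none =>
      exfalso
      rw [hnu] at hj
      exact GS_IR P prio q hP j hj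
    | some t => exact ⟨t, rfl, by rw [hnu] at hj; exact hj⟩
  -- (†) for j ∈ B with ν j = some t, school t ends full with better students
  have hfull : ∀ j ∈ B, ∀ t, ν j = some t →
      (daHeld P prio q (finalState P prio q) t).length = q t ∧
      (∀ h ∈ daHeld P prio q (finalState P prio q) t, prioLt (prio t) h j) := by
    intro j hj t ht
    obtain ⟨t', ht', hpref⟩ := haux j hj
    rw [ht] at ht'
    obtain rfl : t = t' := Option.some.inj ht'
    obtain ⟨h1, h2, _⟩ := better_school_full P prio q hP hprio hpref
    exact ⟨h1, h2⟩
  have hcardfull : ∀ j ∈ B, ∀ t, ν j = some t →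
      (Finset.univ.filter (fun h => μ h = some t)).card = q t := by
    intro j hj t ht
    have hset : Finset.univ.filter (fun h => μ h = some t) =
        (daHeld P prio q (finalState P prio q) t).toFinset := by
      ext h
      rw [Finset.mem_filter, List.mem_toFinset]
      constructor
      · intro hh; exact (matched_iff_held P prio q hP hprio).mp hh.2
      · intro hh; exact ⟨Finset.mem_univ _, (matched_iff_held P prio q hP hprio).mpr hh⟩
    rw [hset, List.toFinset_card_of_nodup (held_nodup P prio q ((hprio t).1))]
    exact (hfull j hj t ht).1
  -- not in B and differing from μ means strictly worse than μ
  have hνworse : ∀ x, x ∉ B → ∀ t, μ x = some t → ν x ≠ some t →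
      prefLt (P x) (some t) (ν x) := by
    intro x hx t hμx hνx
    have h1 : ¬ prefLt (P x) (ν x) (μ x) := by rwa [hmemB] at hx
    rcases prefLt_total (hP x) (show ν x ≠ μ x by rw [hμx]; exact hνx) with h | h
    · exact absurd h h1
    · rwa [hμx] at h
  -- case 1 : some school in ν(B) keeps a non-B student not ν-matched there
  by_cases hcase : ∃ j ∈ B, ∃ t, ν j = some t ∧ ∃ h, μ h = some t ∧ ν h ≠ some t ∧ h ∉ B
  · obtain ⟨j, hj, t, hjt, h, hμh, hνh, hhB⟩ := hcase
    refine ⟨h, t, by rwa [hmemB] at hhB, ?_, Or.inr ⟨j, hjt, ?_⟩⟩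
    · exact hνworse h hhB t hμh hνh
    · have hheld : h ∈ daHeld P prio q (finalState P prio q) t :=
        (matched_iff_held P prio q hP hprio).mp hμh
      exact (hfull j hj t hjt).2 h hheld
  -- case 2 : counting shows every B-member is μ-matched inside ν(B)
  · push_neg at hcase
    have hcase' : ∀ j ∈ B, ∀ t, ν j = some t → ∀ h, μ h = some t → ν h ≠ some t → h ∈ B :=
      hcase
    set T' : Finset S := Finset.univ.filter (fun t => ∃ j ∈ B, ν j = some t) with hT'
    have hmemT' : ∀ t, t ∈ T' ↔ ∃ j ∈ B, ν j = some t := by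
      intro t; rw [hT', Finset.mem_filter]; simp
    set Aset : S → Finset I := fun t =>
      (Finset.univ.filter (fun h => μ h = some t)) \ (Finset.univ.filter (fun h => ν h = some t))
      with hAset
    set Cset : S → Finset I := fun t =>
      (Finset.univ.filter (fun h => ν h = some t)) \ (Finset.univ.filter (fun h => μ h = some t))
      with hCset
    have hAC : ∀ t ∈ T', (Cset t).card ≤ (Aset t).card := by
      intro t ht
      obtain ⟨j, hj, hjt⟩ := (hmemT' t).mp ht
      have h1 : (Finset.univ.filter (fun h => μ h = some t)).card = q t :=
        hcardfull j hj t hjt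
      have h2 : (Finset.univ.filter (fun h => ν h = some t)).card ≤ q t := hν t
      have h3 := Finset.card_sdiff_add_card_inter
        (Finset.univ.filter (fun h => μ h = some t)) (Finset.univ.filter (fun h => ν h = some t))
      have h4 := Finset.card_sdiff_add_card_inter
        (Finset.univ.filter (fun h => ν h = some t)) (Finset.univ.filter (fun h => μ h = some t))
      rw [Finset.inter_comm] at h4
      have h5 : Aset t = (Finset.univ.filter (fun h => μ h = some t)) \
          (Finset.univ.filter (fun h => ν h = some t)) := rfl
      have h6 : Cset t = (Finset.univ.filter (fun h => ν h = some t)) \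
          (Finset.univ.filter (fun h => μ h = some t)) := rfl
      rw [h5, h6]
      omega
    have hBsubC : B ⊆ T'.biUnion Cset := by
      intro j hj
      obtain ⟨t, hjt, hpref⟩ := haux j hj
      rw [Finset.mem_biUnion]
      refine ⟨t, (hmemT' t).mpr ⟨j, hj, hjt⟩, ?_⟩
      rw [hCset]
      simp only [Finset.mem_sdiff, Finset.mem_filter]
      refine ⟨⟨Finset.mem_univ _, hjt⟩, ?_⟩
      rintro ⟨-, hμj⟩
      rw [hμj] at hpref
      exact prefLt_irrefl _ _ hpref
    have hAsubB : T'.biUnion Aset ⊆ B := by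
      intro h hh
      rw [Finset.mem_biUnion] at hh
      obtain ⟨t, ht, hht⟩ := hh
      rw [hAset] at hht
      simp only [Finset.mem_sdiff, Finset.mem_filter] at hht
      obtain ⟨⟨-, hμh⟩, hνh⟩ := hht
      obtain ⟨j, hj, hjt⟩ := (hmemT' t).mp ht
      exact hcase' j hj t hjt h hμh (fun hc => hνh ⟨Finset.mem_univ _, hc⟩)
    have hdisjC : ∀ t1 ∈ T', ∀ t2 ∈ T', t1 ≠ t2 → Disjoint (Cset t1) (Cset t2) := by
      intro t1 _ t2 _ h12
      rw [Finset.disjoint_left]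
      intro a ha1 ha2
      rw [hCset] at ha1 ha2
      simp only [Finset.mem_sdiff, Finset.mem_filter] at ha1 ha2
      rw [ha1.1.2] at ha2
      exact h12 (Option.some.inj ha2.1.2)
    have hdisjA : ∀ t1 ∈ T', ∀ t2 ∈ T', t1 ≠ t2 → Disjoint (Aset t1) (Aset t2) := by
      intro t1 _ t2 _ h12
      rw [Finset.disjoint_left]
      intro a ha1 ha2
      rw [hAset] at ha1 ha2
      simp only [Finset.mem_sdiff, Finset.mem_filter] at ha1 ha2
      rw [ha1.1.2] at ha2
      exact h12 (Option.some.inj ha2.1.2)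
    have hchain : (T'.biUnion Aset).card ≤ B.card := Finset.card_le_card hAsubB
    have hCcard : (T'.biUnion Cset).card = ∑ t ∈ T', (Cset t).card :=
      Finset.card_biUnion hdisjC
    have hAcard : (T'.biUnion Aset).card = ∑ t ∈ T', (Aset t).card :=
      Finset.card_biUnion hdisjA
    have hsum : ∑ t ∈ T', (Cset t).card ≤ ∑ t ∈ T', (Aset t).card :=
      Finset.sum_le_sum hAC
    have hBcard : B.card ≤ (T'.biUnion Cset).card := Finset.card_le_card hBsubC
    have hAeqB : T'.biUnion Aset = B :=
      Finset.eq_of_subset_of_card_le hAsubB (by omega)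
    -- hence every member of B is μ-matched to a school in ν(B)
    have hmatchB : ∀ j ∈ B, ∃ t, μ j = some t ∧ ∃ j3 ∈ B, ν j3 = some t := by
      intro j hj
      rw [← hAeqB, Finset.mem_biUnion] at hj
      obtain ⟨t, ht, hjt⟩ := hj
      rw [hAset] at hjt
      simp only [Finset.mem_sdiff, Finset.mem_filter] at hjt
      exact ⟨t, hjt.1.2, (hmemT' t).mp ht⟩
    -- the last rejection of a B-member by a school in ν(B)
    set rej : ℕ → Prop := fun m => ∃ j ∈ B, ∃ t, (∃ j3 ∈ B, ν j3 = some t) ∧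
      daTarget P (runState P prio q m) j = some t ∧
      j ∉ daHeld P prio q (runState P prio q m) t with hrej
    have hrej_exists : ∃ m ≤ N, rej m := by
      obtain ⟨j, hj⟩ := hBne
      obtain ⟨t, hjt, hpref⟩ := haux j hj
      obtain ⟨-, n, hn, h1, h2⟩ := rejected_by_better P prio q hP hpref
      exact ⟨n, by omega, j, hj, t, ⟨j, hj, hjt⟩, h1, h2⟩
    obtain ⟨m0, hm0N, hm0⟩ := hrej_exists
    set mhat := Nat.findGreatest rej N with hmhat
    have hmhat_le : m0 ≤ mhat := Nat.le_findGreatest hm0N hm0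
    have hmhat_spec : rej mhat := Nat.findGreatest_spec (P := rej) hm0N hm0
    have hmhat_max : ∀ m, mhat < m → m < N → ¬ rej m := by
      intro m hm hmN
      exact Nat.findGreatest_is_greatest hm (by omega)
    -- no rejections at all from round N on
    have hmax : ∀ m, mhat < m → ¬ rej m := by
      intro m hm
      rcases Nat.lt_or_ge m N with h1 | h1
      · exact hmhat_max m hm h1
      · rintro ⟨j, hj, t, ht', h1', h2'⟩
        exact no_late_rejection P prio q hP h1 h1' h2'
    obtain ⟨jh, hjhB, that, hthat', htarget, hheld⟩ := hmhat_spec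
    -- set t2 := μ jh, the final school of jh, which lies in ν(B)
    obtain ⟨t2, hμjh, jh3, hjh3B, hνjh3⟩ := hmatchB jh hjhB
    obtain ⟨hfi, ht2acc⟩ := final_index P prio q hP hμjh
    -- jh was rejected by that at round mhat, so its state strictly increased past that
    have hidx_that : runState P prio q mhat jh = (acceptables (P jh)).idxOf that := by
      rw [daTarget] at htarget
      rw [List.getElem?_eq_some_iff] at htarget
      obtain ⟨hlt, hget⟩ := htarget
      rw [← hget, List.Nodup.idxOf_getElem (acceptables_nodup (hP jh)) _ hlt]
    have hmhatN : mhat < N := by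
      by_contra hc
      push_neg at hc
      exact no_late_rejection P prio q hP hc htarget hheld
    have hstep_inc : runState P prio q (mhat+1) jh = runState P prio q mhat jh + 1 := by
      rw [runState_succ, daStep, htarget]
      simp [hheld]
    have hlt_final : runState P prio q mhat jh < finalState P prio q jh := by
      have h1 : runState P prio q (mhat+1) jh ≤ finalState P prio q jh := by
        rw [finalState]
        exact runState_mono P prio q (by omega) jh
      omega
    -- the first round where jh's state reaches the index of t2
    have hfin_reach : finalState P prio q jh = (acceptables (P jh)).idxOf t2 := hfi
    set v2 := (acceptables (P jh)).idxOf t2 with hv2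
    have hreach : ∃ n, v2 ≤ runState P prio q n jh := ⟨N, by rw [← hfin_reach]; rfl⟩
    set n2 := Nat.find hreach with hn2
    have hn2spec : v2 ≤ runState P prio q n2 jh := Nat.find_spec hreach
    have hn2min : ∀ m, m < n2 → runState P prio q m jh < v2 := by
      intro m hm
      have := Nat.find_min hreach hm
      omega
    have hn2pos : 0 < n2 := by
      rcases Nat.eq_zero_or_pos n2 with h | h
      · exfalso
        rw [h] at hn2spec
        rw [runState] at hn2spec
        simp only [Function.iterate_zero, id] at hn2spec
        have : runState P prio q mhat jh < v2 := by
          rw [← hfin_reach] at *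
          omega
        omega
      · exact h
    have hn2gt : mhat < n2 := by
      by_contra hc
      push_neg at hc
      have h1 := runState_mono P prio q hc jh
      have h2 : runState P prio q mhat jh < v2 := by rw [← hfin_reach] at *; omega
      omega
    -- the state at n2 equals v2 exactly
    have hstate_n2 : runState P prio q n2 jh = v2 := by
      have h1 := hn2min (n2 - 1) (by omega)
      have h2 : n2 - 1 + 1 = n2 := by omega
      have h3 : runState P prio q (n2-1+1) jh = runState P prio q (n2-1) jh ∨
          runState P prio q (n2-1+1) jh = runState P prio q (n2-1) jh + 1 := by
        rw [runState_succ]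
        rcases daStep_cases P prio q (runState P prio q (n2-1)) jh with h5 | ⟨h5, _⟩
        · exact Or.inl h5
        · exact Or.inr h5
      rw [h2] at h3
      omega
    have htarget_n2 : daTarget P (runState P prio q n2) jh = some t2 := by
      rw [daTarget, hstate_n2, hv2]
      rw [List.getElem?_eq_getElem (List.idxOf_lt_length_iff.mpr ht2acc)]
      rw [List.getElem_idxOf]
    -- jh is held by t2 at n2 (otherwise its state would exceed v2, the final state)
    have hheld_n2 : jh ∈ daHeld P prio q (runState P prio q n2) t2 := by
      by_contra hc
      have h1 : runState P prio q (n2+1) jh = runState P prio q n2 jh + 1 := by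
        rw [runState_succ, daStep, htarget_n2]
        simp [hc]
      have h2 : runState P prio q (n2+1) jh ≤ finalState P prio q jh := by
        rcases Nat.lt_or_ge (n2+1) N with h3 | h3
        · rw [finalState]; exact runState_mono P prio q (by omega) jh
        · rw [runState_eq_final P prio q hP h3]
      rw [← hfin_reach] at hstate_n2
      omega
    -- jh3's rejection by t2 happened at some m3 ≤ mhat; from then on t2 is full
    -- with students of higher priority than jh3
    have hjh3pref : prefLt (P jh3) (some t2) (μ jh3) := by
      obtain ⟨t', ht', hpref⟩ := haux jh3 hjh3B
      rw [hνjh3] at ht'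
      obtain rfl : t2 = t' := Option.some.inj ht'
      exact hpref
    obtain ⟨-, m3, hm3N, hm3t, hm3h⟩ := rejected_by_better P prio q hP hjh3pref
    have hm3le : m3 ≤ mhat := by
      by_contra hc
      push_neg at hc
      exact hmax m3 hc ⟨jh3, hjh3B, t2, ⟨jh3, hjh3B, hνjh3⟩, hm3t, hm3h⟩
    have hinv3 : Inv P prio q (runState P prio q m3) t2 jh3 :=
      rejected_full P prio q ((hprio t2).1) ((hprio t2).2 jh3) hm3t hm3h
    have hinv_n1 : Inv P prio q (runState P prio q (n2-1)) t2 jh3 :=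
      inv_persist P prio q ((hprio t2).1) (by omega) hinv3
    have hinv_n2 : Inv P prio q (runState P prio q n2) t2 jh3 :=
      inv_persist P prio q ((hprio t2).1) (by omega) hinv3
    -- jh is not held by t2 at n2 - 1
    have hjh_not_n1 : jh ∉ daHeld P prio q (runState P prio q (n2-1)) t2 := by
      intro hc
      have h1 := (mem_held_target P prio q hc).1
      rw [daTarget, List.getElem?_eq_some_iff] at h1
      obtain ⟨hlt, hget⟩ := h1
      have h2 : runState P prio q (n2-1) jh = v2 := by
        rw [hv2, ← hget, List.Nodup.idxOf_getElem (acceptables_nodup (hP jh)) _ hlt]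
      have := hn2min (n2-1) (by omega)
      omega
    -- some student x held at n2 - 1 is rejected at n2
    have hx_exists : ∃ x ∈ daHeld P prio q (runState P prio q (n2-1)) t2,
        x ∉ daHeld P prio q (runState P prio q n2) t2 := by
      by_contra hc
      push_neg at hc
      -- then held at n2 contains all of held at n2-1 plus jh : too many
      have hsub : (daHeld P prio q (runState P prio q (n2-1)) t2).toFinset ∪ {jh} ⊆
          (daHeld P prio q (runState P prio q n2) t2).toFinset := by
        intro y hy
        rw [Finset.mem_union, List.mem_toFinset, Finset.mem_singleton] at hy
        rw [List.mem_toFinset]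
        rcases hy with hy | rfl
        · exact hc y hy
        · exact hheld_n2
      have hcard1 : ((daHeld P prio q (runState P prio q (n2-1)) t2).toFinset ∪ {jh}).card
          = q t2 + 1 := by
        rw [Finset.union_comm, Finset.card_union_of_disjoint (by
          rw [Finset.disjoint_singleton_left, List.mem_toFinset]
          exact hjh_not_n1)]
        rw [List.toFinset_card_of_nodup (held_nodup P prio q ((hprio t2).1)), hinv_n1.1,
          Finset.card_singleton]
        omega
      have hcard2 : (daHeld P prio q (runState P prio q n2) t2).toFinset.card = q t2 := by
        rw [List.toFinset_card_of_nodup (held_nodup P prio q ((hprio t2).1)), hinv_n2.1]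
      have := Finset.card_le_card hsub
      omega
    obtain ⟨x, hxheld, hxrej⟩ := hx_exists
    -- x applies to t2 at n2 (still targeting it) and is rejected there
    have hn1succ : n2 - 1 + 1 = n2 := by omega
    have hxtarget : daTarget P (runState P prio q n2) x = some t2 := by
      have := held_subset_next_filter P prio q hxheld
      rw [← runState_succ, hn1succ] at this
      simpa using (List.of_mem_filter this)
    -- x is not in B (else the rejection at n2 > mhat contradicts maximality)
    have hxB : x ∉ B := by
      intro hc
      exact hmax n2 (by omega) ⟨x, hc, t2, ⟨jh3, hjh3B, hνjh3⟩, hxtarget, hxrej⟩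
    -- x strictly prefers t2 to its final outcome
    have hxacc : t2 ∈ acceptables (P x) := by
      rw [daTarget, List.getElem?_eq_some_iff] at hxtarget
      obtain ⟨hlt, hget⟩ := hxtarget
      rw [← hget]; exact List.getElem_mem hlt
    have hxidx : runState P prio q n2 x = (acceptables (P x)).idxOf t2 := by
      rw [daTarget, List.getElem?_eq_some_iff] at hxtarget
      obtain ⟨hlt, hget⟩ := hxtarget
      rw [← hget, List.Nodup.idxOf_getElem (acceptables_nodup (hP x)) _ hlt]
    have hn2N : n2 < N := by
      by_contra hc
      push_neg at hc
      exact no_late_rejection P prio q hP hc hxtarget hxrej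
    have hxfinal : (acceptables (P x)).idxOf t2 < finalState P prio q x := by
      have h1 : runState P prio q (n2+1) x = runState P prio q n2 x + 1 := by
        rw [runState_succ, daStep, hxtarget]
        simp [hxrej]
      have h2 : runState P prio q (n2+1) x ≤ finalState P prio q x := by
        rw [finalState]; exact runState_mono P prio q (by omega) x
      omega
    have hxpref : prefLt (P x) (some t2) (μ x) := by
      match hg : μ x with
      | none =>
        rw [mem_acc_iff_prefLt_none (hP x)] at hxacc
        exact hxacc
      | some u =>
        obtain ⟨hfi2, hu2⟩ := final_index P prio q hP hg
        rw [prefLt, indexOf_some_of_acc (hP x) hxacc, indexOf_some_of_acc (hP x) hu2]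
        omega
    -- ν x ≠ some t2, and x weakly prefers μ to ν, so x strictly prefers t2 to ν x
    have hxν : ν x ≠ some t2 := by
      intro hc
      apply hxB
      rw [hmemB, hc]
      exact hxpref
    have hxfin : prefLt (P x) (some t2) (ν x) := by
      by_cases heq : ν x = μ x
      · rwa [heq]
      · rcases prefLt_total (hP x) heq with h | h
        · exfalso; apply hxB; rw [hmemB]; exact h
        · exact prefLt_trans hxpref h
    -- priorities : x was held at n2 - 1, when t2's held list beats jh3
    have hxprio : prioLt (prio t2) x jh3 := hinv_n1.2 x hxheld
    exact ⟨x, t2, by rwa [hmemB] at hxB, hxfin, Or.inr ⟨jh3, hνjh3, hxprio⟩⟩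

end BlockingLemma

section Corollaries

variable (P : I → List (Option S)) (prio : S → List I) (q : S → ℕ)

/-- optimality: no student strictly prefers any stable matching to the GS outcome. -/
theorem GS_optimal (hP : ∀ i, ValidPref (P i)) (hprio : ∀ s, ValidPrio (prio s))
    (ν : I → Option S) (hν : IsMatching q ν) (hst : IsStable P prio q ν) :
    ∀ j, ¬ prefLt (P j) (ν j) (GS P prio q j) := by
  intro j hj
  obtain ⟨x, t, _, hblocks⟩ := blocking_lemma P prio q hP hprio ν hν ⟨j, hj⟩
  exact hst.2 x ⟨t, hblocks⟩

theorem matched_not_none (hP : ∀ i, ValidPref (P i)) (hprio : ∀ s, ValidPrio (prio s))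
    (ν : I → Option S) (hν : IsMatching q ν) (hst : IsStable P prio q ν) :
    ∀ j, ν j ≠ none → GS P prio q j ≠ none := by
  intro j hj hg
  match hn : ν j with
  | none => exact hj hn
  | some u =>
    have hacc : u ∈ acceptables (P j) := by
      rw [mem_acc_iff_prefLt_none (hP j)]
      have h1 := hst.1 j
      rw [hn] at h1
      rcases prefLt_total (hP j) (show (some u : Option S) ≠ none by simp) with h | h
      · exact h
      · exact absurd h h1
    have : prefLt (P j) (ν j) (GS P prio q j) := by
      rw [hn, hg, prefLt, indexOf_some_of_acc (hP j) hacc, indexOf_none_acc (hP j)]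
      exact List.idxOf_lt_length_iff.mpr hacc
    exact GS_optimal P prio q hP hprio ν hν hst j this

theorem fiber_decomp (f : I → Option S) :
    (Finset.univ.filter (fun j => f j ≠ none)).card =
      ∑ t : S, (Finset.univ.filter (fun j => f j = some t)).card := by
  have hdecomp : Finset.univ.filter (fun j => f j ≠ none) =
      Finset.univ.biUnion (fun t : S => Finset.univ.filter (fun j => f j = some t)) := by
    ext j
    rw [Finset.mem_filter, Finset.mem_biUnion]
    constructor
    · rintro ⟨-, hj⟩
      match hf : f j with
      | none => exact absurd hf hj
      | some t => exact ⟨t, Finset.mem_univ _, Finset.mem_filter.mpr ⟨Finset.mem_univ _, hf⟩⟩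
    · rintro ⟨t, -, ht⟩
      rw [Finset.mem_filter] at ht
      exact ⟨Finset.mem_univ _, by rw [ht.2]; simp⟩
  rw [hdecomp, Finset.card_biUnion]
  intro t1 _ t2 _ h12
  rw [Function.onFun, Finset.disjoint_left]
  intro a ha1 ha2
  rw [Finset.mem_filter] at ha1 ha2
  rw [ha1.2] at ha2
  exact h12 (Option.some.inj ha2.2)

/-- rural-hospitals style conclusion: the set of matched students is the same under the
GS outcome and under any stable matching. -/
theorem matched_set_eq (hP : ∀ i, ValidPref (P i)) (hprio : ∀ s, ValidPrio (prio s))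
    (ν : I → Option S) (hν : IsMatching q ν) (hst : IsStable P prio q ν) :
    ∀ j, ν j = none ↔ GS P prio q j = none := by
  have hsub : Finset.univ.filter (fun j => ν j ≠ none) ⊆
      Finset.univ.filter (fun j => GS P prio q j ≠ none) := by
    intro j hj
    rw [Finset.mem_filter] at *
    exact ⟨Finset.mem_univ _, matched_not_none P prio q hP hprio ν hν hst j hj.2⟩
  have hfiber : ∀ t : S, (Finset.univ.filter (fun j => GS P prio q j = some t)).card ≤
      (Finset.univ.filter (fun j => ν j = some t)).card := by
    intro t
    by_contra hc
    push_neg at hc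
    have hle : (Finset.univ.filter (fun j => GS P prio q j = some t)).card ≤ q t :=
      GS_isMatching P prio q (fun s => (hprio s).1) t
    have hnotsub : ¬ (Finset.univ.filter (fun j => GS P prio q j = some t) ⊆
        Finset.univ.filter (fun j => ν j = some t)) := by
      intro hsub2
      exact absurd (Finset.card_le_card hsub2) (by omega)
    obtain ⟨j, hj1, hj2⟩ := Finset.not_subset.mp hnotsub
    rw [Finset.mem_filter] at hj1
    have hj2' : ν j ≠ some t := by
      intro hcc
      exact hj2 (Finset.mem_filter.mpr ⟨Finset.mem_univ _, hcc⟩)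
    have hdiff : ν j ≠ GS P prio q j := by rw [hj1.2]; exact hj2'
    have hworse : prefLt (P j) (GS P prio q j) (ν j) := by
      rcases prefLt_total (hP j) hdiff with h | h
      · exact absurd h (GS_optimal P prio q hP hprio ν hν hst j)
      · exact h
    apply hst.2 j
    refine ⟨t, ?_, Or.inl (by omega)⟩
    rw [← hj1.2]; exact hworse
  have htot : (Finset.univ.filter (fun j => GS P prio q j ≠ none)).card ≤
      (Finset.univ.filter (fun j => ν j ≠ none)).card := by
    rw [fiber_decomp, fiber_decomp]
    exact Finset.sum_le_sum (fun t _ => hfiber t)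
  have heq : Finset.univ.filter (fun j => ν j ≠ none) =
      Finset.univ.filter (fun j => GS P prio q j ≠ none) :=
    Finset.eq_of_subset_of_card_le hsub htot
  intro j
  constructor
  · intro h
    by_contra hc
    have : j ∈ Finset.univ.filter (fun j => ν j ≠ none) := by
      rw [heq, Finset.mem_filter]; exact ⟨Finset.mem_univ _, hc⟩
    rw [Finset.mem_filter] at this
    exact this.2 h
  · intro h
    by_contra hc
    have : j ∈ Finset.univ.filter (fun j => GS P prio q j ≠ none) := by
      rw [← heq, Finset.mem_filter]; exact ⟨Finset.mem_univ _, hc⟩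
    rw [Finset.mem_filter] at this
    exact this.2 h

end Corollaries

theorem fpfPrio_nodup (fpf : Finset S) (P : I → List (Option S)) (prio : S → List I)
    (s : S) (h : (prio s).Nodup) : (fpfPrio fpf P prio s).Nodup := by
  rw [fpfPrio]
  split_ifs with hs
  · rw [List.nodup_flatMap]
    constructor
    · intro x _
      exact h.filter _
    · have hpw : (List.range (Fintype.card S + 1)).Pairwise (· ≠ ·) :=
        (List.nodup_range)
      refine hpw.imp ?_
      intro r1 r2 h12
      rw [Function.onFun]
      intro a ha1 ha2
      have h1 := List.of_mem_filter ha1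
      have h2 := List.of_mem_filter ha2
      simp only [decide_eq_true_eq] at h1 h2
      exact h12 (h1 ▸ h2 ▸ rfl)
  · exact h

section Main

variable (P : I → List (Option S)) (prio : S → List I) (q : S → ℕ)

theorem main_theorem
    (hIS : Fintype.card S < Fintype.card I)
    (fpf : Finset S)
    (hP : ∀ i, ValidPref (P i)) (hprio : ∀ s, ValidPrio (prio s))
    (k : ℕ) (hk : 1 < k)
    (hstab : IsStable P prio q (FPFk fpf k P prio q)) :
    NotManipulable (fun R => GSk k R prio q) P := by
  intro i hmanip
  obtain ⟨Q, hQ, hpref⟩ := hmanip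
  set Rk : I → List (Option S) := fun j => truncate (P j) k with hRk
  have hRkvalid : ∀ j, ValidPref (Rk j) := fun j => truncate_valid (hP j) k
  have hcomm : (fun j => truncate (Function.update P i Q j) k) =
      Function.update Rk i (truncate Q k) := by
    funext j
    by_cases hji : j = i
    · subst hji
      rw [Function.update_self, Function.update_self]
    · rw [Function.update_of_ne hji, Function.update_of_ne hji]
  set RQ := Function.update Rk i (truncate Q k) with hRQ
  set μ := GS Rk prio q with hμdef
  set ν := GS RQ prio q with hνdef
  have hpref' : prefLt (P i) (ν i) (μ i) := by
    have h1 : (fun R => GSk k R prio q) P = μ := rfl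
    have h2 : (fun R => GSk k R prio q) (Function.update P i Q) = ν := by
      show GSk k (Function.update P i Q) prio q = ν
      rw [GSk, hcomm]
    rw [h1, h2] at hpref
    exact hpref
  have hRQvalid : ∀ j, ValidPref (RQ j) := by
    intro j
    by_cases hji : j = i
    · subst hji; rw [hRQ, Function.update_self]; exact truncate_valid hQ k
    · rw [hRQ, Function.update_of_ne hji]; exact hRkvalid j
  have hprioN : ∀ s, (prio s).Nodup := fun s => (hprio s).1
  have hνstable : IsStable RQ prio q ν := GS_stable RQ prio q hRQvalid hprio
  have hνmatch : IsMatching q ν := GS_isMatching RQ prio q hprioN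
  -- μ-outcome structure
  have hμfact : μ i = none ∨ ∃ u ∈ (acceptables (P i)).take k, μ i = some u := by
    match hm : μ i with
    | none => exact Or.inl rfl
    | some u =>
      right
      refine ⟨u, ?_, rfl⟩
      have := GS_mem_acceptables Rk prio q hm
      rwa [hRk, acceptables_truncate] at this
  -- ν i is a school s
  obtain ⟨s, hνi⟩ : ∃ s, ν i = some s := by
    match hn : ν i with
    | some u => exact ⟨u, rfl⟩
    | none =>
      exfalso
      rw [hn] at hpref'
      rcases hμfact with h | ⟨u, hu, h⟩
      · rw [h] at hpref'
        exact prefLt_irrefl _ _ hpref'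
      · rw [h] at hpref'
        have huA : u ∈ acceptables (P i) := List.take_subset _ _ hu
        have h1 : (P i).idxOf (some u) < (P i).idxOf none := by
          rw [indexOf_some_of_acc (hP i) huA, indexOf_none_acc (hP i)]
          exact List.idxOf_lt_length_iff.mpr huA
        rw [prefLt] at hpref'
        omega
  rw [hνi] at hpref'
  by_cases hcaseA : s ∈ (acceptables (P i)).take k
  · -- Case A : the coveted school is within the top k; blocking lemma at profile Rk
    have hprefk : prefLt (Rk i) (ν i) (μ i) := by
      rw [hνi]
      have hb : μ i = none ∨ ∃ u ∈ (acceptables (P i)).take k, μ i = some u := hμfact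
      have hb' : μ i = none ∨ ∃ u ∈ (acceptables (P i)).take k, μ i = some u := hb
      rcases hb with h | ⟨u, hu, h⟩
      · rw [h] at hpref' ⊢
        exact prefLt_truncate_of_prefLt (hP i) hcaseA (Or.inl rfl) hpref'
      · rw [h] at hpref' ⊢
        exact prefLt_truncate_of_prefLt (hP i) hcaseA (Or.inr ⟨u, hu, rfl⟩) hpref'
    have hprefk' : prefLt (Rk i) (ν i) (GS Rk prio q i) := by
      rw [hνi] at hprefk ⊢; exact hprefk
    obtain ⟨x, t, hxnB, hblocks⟩ := blocking_lemma Rk prio q hRkvalid hprio ν hνmatch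
      ⟨i, hprefk'⟩
    have hxi : x ≠ i := by
      intro h
      subst h
      exact hxnB hprefk'
    apply hνstable.2 x
    refine ⟨t, ?_, hblocks.2⟩
    have hxx : RQ x = Rk x := Function.update_of_ne hxi _ _
    rw [hxx]
    exact hblocks.1
  · -- Case B : the coveted school is outside the top k
    have hμnone : μ i = none := by
      rcases hμfact with h | ⟨u, hu, h⟩
      · exact h
      · exfalso
        rw [h] at hpref'
        have huA : u ∈ acceptables (P i) := List.take_subset _ _ hu
        have hsacc : s ∈ acceptables (P i) := by
          rw [mem_acc_iff_prefLt_none (hP i)]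
          have h1 : prefLt (P i) (some u) none := (mem_acc_iff_prefLt_none (hP i)).mp huA
          exact prefLt_trans hpref' h1
        have h2 : (acceptables (P i)).idxOf s < (acceptables (P i)).idxOf u :=
          (prefLt_some_some_iff (hP i) hsacc huA).mp hpref'
        have h3 : (acceptables (P i)).idxOf u < k := indexOf_take_lt hu
        exact hcaseA (mem_take_of_indexOf_lt hsacc (by omega))
    rw [hμnone] at hpref'
    have hsaccP : s ∈ acceptables (P i) := (mem_acc_iff_prefLt_none (hP i)).mpr hpref'
    -- the single-school report
    set Qs : List (Option S) :=
      [s].map some ++ none :: (P i).filter (fun x => decide (x ≠ some s ∧ x ≠ none)) with hQs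
    have hQsvalid : ValidPref Qs := by
      constructor
      · rw [hQs]
        refine List.Nodup.append ?_ ?_ ?_
        · simp
        · refine List.Nodup.cons (by simp) ((List.filter_sublist).nodup (hP i).1)
        · intro x hx hy
          simp only [List.map_cons, List.map_nil, List.mem_singleton] at hx
          subst hx
          rcases List.mem_cons.mp hy with h | h
          · cases h
          · have := List.of_mem_filter h
            simp only [decide_eq_true_eq] at this
            exact this.1 rfl
      · intro x
        rw [hQs]
        match x with
        | none => exact List.mem_append_right _ (List.mem_cons_self)
        | some t =>
          by_cases hts : t = s
          · subst hts; exact List.mem_append_left _ (by simp)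
          · refine List.mem_append_right _ (List.mem_cons_of_mem _ ?_)
            refine List.mem_filter.mpr ⟨(hP i).2 _, ?_⟩
            simp only [decide_eq_true_eq]
            exact ⟨by simpa using hts, by simp⟩
    -- index facts for Qs
    have hQs_idx_s : Qs.idxOf (some s) = 0 := by
      rw [hQs]
      have := shape_indexOf_some_of_mem (B := [s])
        (rest := (P i).filter (fun x => decide (x ≠ some s ∧ x ≠ none)))
        (List.mem_singleton.mpr rfl)
      rw [this]
      simp [obeq]
    have hQs_idx_none : Qs.idxOf none = 1 := by
      rw [hQs]
      have := shape_indexOf_none (B := [s])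
        (rest := (P i).filter (fun x => decide (x ≠ some s ∧ x ≠ none)))
      rw [this]
      rfl
    have hQs_idx_other : ∀ t : S, t ≠ s → 2 ≤ Qs.idxOf (some t) := by
      intro t hts
      rw [hQs]
      have := shape_indexOf_some_of_not_mem (B := [s])
        (rest := (P i).filter (fun x => decide (x ≠ some s ∧ x ≠ none)))
        (by simpa using hts)
      simpa using this
    set R0 := Function.update Rk i Qs with hR0
    have hR0valid : ∀ j, ValidPref (R0 j) := by
      intro j
      by_cases hji : j = i
      · subst hji; rw [hR0, Function.update_self]; exact hQsvalid
      · rw [hR0, Function.update_of_ne hji]; exact hRkvalid j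
    -- the FPF matching
    set μF := FPFk fpf k P prio q with hμF
    have hμFdef : μF = GS Rk (fpfPrio fpf Rk prio) q := rfl
    have hfprioN : ∀ s, (fpfPrio fpf Rk prio s).Nodup :=
      fun s => fpfPrio_nodup fpf Rk prio s (hprioN s)
    have hμFmatch : IsMatching q μF := by
      rw [hμFdef]
      exact GS_isMatching Rk (fpfPrio fpf Rk prio) q hfprioN
    have hμFacc : ∀ j u, μF j = some u → u ∈ (acceptables (P j)).take k := by
      intro j u hj
      rw [hμFdef] at hj
      have := GS_mem_acceptables Rk (fpfPrio fpf Rk prio) q hj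
      rwa [hRk, acceptables_truncate] at this
    -- μF is stable for the truncated profile with the *original* priorities
    have hμFstableRk : IsStable Rk prio q μF := by
      constructor
      · intro j
        match hm : μF j with
        | none => exact prefLt_irrefl _ _
        | some u =>
          have hu := hμFacc j u hm
          intro hcon
          rw [prefLt, truncate_indexOf_none, truncate_indexOf_some_mem hu] at hcon
          have := List.idxOf_lt_length_iff.mpr hu
          omega
      · rintro j ⟨t, hpre, hcap⟩
        apply hstab.2 j
        refine ⟨t, ?_, hcap⟩
        have hb : μF j = none ∨ ∃ u ∈ (acceptables (P j)).take k, μF j = some u := by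
          match hm : μF j with
          | none => exact Or.inl rfl
          | some u => exact Or.inr ⟨u, hμFacc j u hm, rfl⟩
        exact prefLt_of_prefLt_truncate (hP j) hb hpre
    -- μF leaves i unmatched
    have hμFi : μF i = none :=
      (matched_set_eq Rk prio q hRkvalid hprio μF hμFmatch hμFstableRk i).mpr hμnone
    -- μF is stable at the profile R0
    have hμFstableR0 : IsStable R0 prio q μF := by
      constructor
      · intro j
        by_cases hji : j = i
        · rw [hji, hμFi]
          exact prefLt_irrefl _ _
        · rw [hR0, Function.update_of_ne hji]
          exact hμFstableRk.1 j
      · rintro j ⟨t, hpre, hcap⟩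
        by_cases hji : j = i
        · rw [hR0, hji, Function.update_self, hμFi] at hpre
          rw [hji] at hcap
          have hts : t = s := by
            by_contra hts
            have h1 := hQs_idx_other t hts
            rw [prefLt, hQs_idx_none] at hpre
            omega
          subst hts
          apply hstab.2 i
          refine ⟨t, ?_, hcap⟩
          rw [hμFi]
          exact (mem_acc_iff_prefLt_none (hP i)).mp hsaccP
        · rw [hR0, Function.update_of_ne hji] at hpre
          exact hμFstableRk.2 j ⟨t, hpre, hcap⟩
    -- ν is stable at the profile R0
    have hνstableR0 : IsStable R0 prio q ν := by
      constructor
      · intro j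
        by_cases hji : j = i
        · rw [hji, hνi, hR0, Function.update_self, prefLt, hQs_idx_none, hQs_idx_s]
          omega
        · rw [hR0, Function.update_of_ne hji]
          have := hνstable.1 j
          rwa [hRQ, Function.update_of_ne hji] at this
      · rintro j ⟨t, hpre, hcap⟩
        by_cases hji : j = i
        · rw [hR0, hji, Function.update_self, hνi, prefLt, hQs_idx_s] at hpre
          have h2 := hQs_idx_other t
          by_cases hts : t = s
          · subst hts
            rw [hQs_idx_s] at hpre
            omega
          · have := h2 hts
            omega
        · rw [hR0, Function.update_of_ne hji] at hpre
          apply hνstable.2 j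
          refine ⟨t, ?_, hcap⟩
          rwa [hRQ, Function.update_of_ne hji]
    -- the GS outcome at R0 matches i, yet μF does not : contradiction
    set ρ := GS R0 prio q with hρ
    have hρi : ρ i ≠ none := by
      intro hc
      have hopt := GS_optimal R0 prio q hR0valid hprio ν hνmatch hνstableR0 i
      apply hopt
      rw [hνi, ← hρ, hc, hR0, prefLt, Function.update_self, hQs_idx_s, hQs_idx_none]
      omega
    exact hρi ((matched_set_eq R0 prio q hR0valid hprio μF hμFmatch hμFstableR0 i).mp hμFi)

end Main


/-- Proposition 4: for `k > 1`, if the constrained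
first-preference-first mechanism `FPF^k` is stable at `(P,≻,q)` then the constrained
Gale–Shapley mechanism `GS^k` is not manipulable at `(P,≻,q)`. -/
theorem fpfk_stable_implies_gsk_not_manipulable
    {I S : Type*} [Fintype I] [DecidableEq I] [Fintype S] [DecidableEq S]
    (hIS : Fintype.card S < Fintype.card I)
    (fpf : Finset S)
    (P : I → List (Option S)) (prio : S → List I) (q : S → ℕ)
    (hP : ∀ i, ValidPref (P i)) (hprio : ∀ s, ValidPrio (prio s))
    (k : ℕ) (hk : 1 < k)
    (hstab : IsStable P prio q (FPFk fpf k P prio q)) :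
    NotManipulable (fun R => GSk k R prio q) P :=
  main_theorem P prio q hIS fpf hP hprio k hk hstab

end SchoolChoice
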